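/- The quantale Δ of distribution functions satisfies: for all u, v, w ∈ Δ, w ∧ (u ⊗ v) = ⋁ { u' ⊗ v' : u' ≤ u, v' ≤ v, u' ⊗ v' ≤ w }. (This is the condition guaranteeing that every injective probabilistic metric space is exponentiable.) -/

import Mathlib

open scoped ENNReal

noncomputable section

/-- A distribution function: a monotone map `f : [0,∞] → [0,1]` which is
left continuous in the sense that `f x = ⨆ y < x, f y`. (We realise `[0,1]`
as the elements of `ℝ≥0∞` below `1`.) -/
def IsDistr (f : ℝ≥0∞ → ℝ≥0∞) : Prop :=
  (∀ t, f t ≤ 1) ∧ Monotone f ∧ ∀ x, f x = ⨆ y, ⨆ _ : y < x, f y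

/-- The set `Δ` of distribution functions, with the pointwise order. -/
def Distr : Type := {f : ℝ≥0∞ → ℝ≥0∞ // IsDistr f}

noncomputable instance : PartialOrder Distr :=
  inferInstanceAs (PartialOrder {f : ℝ≥0∞ → ℝ≥0∞ // IsDistr f})

/-- The step function `f_{δ,u}`: value `0` for `t ≤ δ` and `u` for `t > δ`. -/
def stepFun (δ u : ℝ≥0∞) : ℝ≥0∞ → ℝ≥0∞ := fun t => if t ≤ δ then 0 else u

/-- The convolution product `(f ⊗ g)(t) = ⨆_{r+s ≤ t} f r * g s`. -/
def conv (f g : ℝ≥0∞ → ℝ≥0∞) : ℝ≥0∞ → ℝ≥0∞ :=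
  fun t => ⨆ r, ⨆ s, ⨆ _ : r + s ≤ t, f r * g s

/-- The unit `ε = f_{0,1}` of the quantale `Δ`. -/
def epsFun : ℝ≥0∞ → ℝ≥0∞ := stepFun 0 1

lemma isDistr_stepFun {δ c : ℝ≥0∞} (hc : c ≤ 1) : IsDistr (stepFun δ c) := by
  refine ⟨fun t => ?_, fun x y hxy => ?_, fun x => ?_⟩
  · unfold stepFun; split
    · exact zero_le
    · exact hc
  · unfold stepFun
    split_ifs with h1 h2 h2
    · exact le_rfl
    · exact zero_le
    · exact absurd (hxy.trans h2) h1
    · exact le_rfl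
  · rcases le_or_gt x δ with h | h
    · rw [stepFun, if_pos h]
      refine le_antisymm (zero_le) (iSup_le fun y => iSup_le fun hy => le_of_eq ?_)
      rw [stepFun, if_pos (hy.le.trans h)]
    · rw [stepFun, if_neg (not_le.mpr h)]
      refine le_antisymm ?_ (iSup_le fun y => iSup_le fun _ => ?_)
      · obtain ⟨z, hz1, hz2⟩ := exists_between h
        refine le_iSup_of_le z (le_iSup_of_le hz2 ?_)
        rw [stepFun, if_neg (not_le.mpr hz1)]
      · rw [stepFun]; split
        · exact zero_le
        · exact le_rfl

lemma conv_mono {f f' g g' : ℝ≥0∞ → ℝ≥0∞} (hf : f ≤ f') (hg : g ≤ g') (t : ℝ≥0∞) :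
    conv f g t ≤ conv f' g' t :=
  iSup_le fun r => iSup_le fun s => iSup_le fun h =>
    le_iSup_of_le r (le_iSup_of_le s (le_iSup_of_le h (mul_le_mul' (hf r) (hg s))))

lemma conv_stepFun {α β : ℝ≥0∞} (hα : α ≠ ∞) (hβ : β ≠ ∞) (a b : ℝ≥0∞) :
    conv (stepFun α a) (stepFun β b) = stepFun (α + β) (a * b) := by
  funext x
  rw [conv, stepFun]
  rcases le_or_gt x (α + β) with h | h
  · rw [if_pos h]
    refine le_antisymm (iSup_le fun r => iSup_le fun s => iSup_le fun hrs => ?_) (zero_le)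
    by_cases hr : r ≤ α
    · rw [stepFun, if_pos hr, zero_mul]
    · by_cases hs : s ≤ β
      · rw [stepFun, stepFun, if_pos hs, mul_zero]
      · exact absurd (lt_of_lt_of_le (ENNReal.add_lt_add (not_le.mp hr) (not_le.mp hs))
          (hrs.trans h)) (lt_irrefl _)
  · rw [if_neg (not_le.mpr h)]
    refine le_antisymm (iSup_le fun r => iSup_le fun s => iSup_le fun _ => ?_) ?_
    · gcongr <;> · rw [stepFun]; split; exacts [zero_le, le_rfl]
    · set e := x - (α + β) with he
      have he0 : e ≠ 0 := by
        rw [he]; exact (tsub_pos_iff_lt.mpr h).ne'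
      refine le_iSup_of_le (α + e / 2) (le_iSup_of_le (β + e / 2) ?_)
      have hsum : α + e / 2 + (β + e / 2) = x := by
        rw [add_add_add_comm, ENNReal.add_halves, he, add_tsub_cancel_of_le h.le]
      refine le_iSup_of_le hsum.le ?_
      rw [stepFun, stepFun, if_neg, if_neg]
      · exact not_le.mpr (ENNReal.lt_add_right hβ (ENNReal.half_pos he0).ne')
      · exact not_le.mpr (ENNReal.lt_add_right hα (ENNReal.half_pos he0).ne')

lemma main_aux (u v w : Distr) (t r s y : ℝ≥0∞) (hrs : r + s < t) (hy : y < t) :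
    min (w.1 y) (u.1 r * v.1 s) ≤
      ⨆ u' : Distr, ⨆ v' : Distr,
        ⨆ _ : u' ≤ u ∧ v' ≤ v ∧ ∀ s, conv u'.1 v'.1 s ≤ w.1 s,
          conv u'.1 v'.1 t := by
  rcases eq_or_ne (u.1 r) 0 with h0 | h0
  · rw [h0, zero_mul]
    exact (min_le_right _ _).trans (zero_le)
  set a := u.1 r with ha
  set b := v.1 s with hb
  have ha1 : a ≤ 1 := u.2.1 r
  have hatop : a ≠ ∞ := (ha1.trans_lt (by norm_num)).ne
  set d := max y (r + s) with hd
  have hdt : d < t := max_lt hy hrs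
  have hdtop : d ≠ ∞ := (hdt.trans_le le_top).ne
  have hrd : r + s ≤ d := le_max_right _ _
  have hrtop : r ≠ ∞ := fun hr => hdtop (top_le_iff.mp ((hr ▸ le_self_add : (⊤:ℝ≥0∞) ≤ r + s).trans hrd))
  have hrd' : r ≤ d := le_self_add.trans hrd
  set c := min b (w.1 y / a) with hc
  have hc1 : c ≤ 1 := (min_le_left _ _).trans (v.2.1 s)
  set u' : Distr := ⟨stepFun r a, isDistr_stepFun ha1⟩ with hu'
  set v' : Distr := ⟨stepFun (d - r) c, isDistr_stepFun hc1⟩ with hv'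
  have hac : a * c = min (a * b) (w.1 y) := by
    rcases le_total b (w.1 y / a) with hbc | hbc
    · rw [hc, min_eq_left hbc, min_eq_left (by
        have h := (ENNReal.le_div_iff_mul_le (Or.inl h0) (Or.inl hatop)).mp hbc
        rwa [mul_comm] at h)]
    · rw [hc, min_eq_right hbc, ENNReal.mul_div_cancel h0 hatop, min_eq_right]
      calc w.1 y = a * (w.1 y / a) := (ENNReal.mul_div_cancel h0 hatop).symm
        _ ≤ a * b := by gcongr
  have hconv : conv u'.1 v'.1 = stepFun d (min (a * b) (w.1 y)) := by
    rw [hu', hv']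
    show conv (stepFun r a) (stepFun (d - r) c) = _
    rw [conv_stepFun hrtop (fun h => hdtop (top_le_iff.mp (h ▸ tsub_le_self : (⊤:ℝ≥0∞) ≤ d))),
      add_tsub_cancel_of_le hrd', hac]
  have hule : u' ≤ u := by
    intro x
    show stepFun r a x ≤ u.1 x
    rw [stepFun]; split
    · exact zero_le
    · exact u.2.2.1 (le_of_not_ge (by assumption))
  have hvle : v' ≤ v := by
    intro x
    show stepFun (d - r) c x ≤ v.1 x
    rw [stepFun]; split
    · exact zero_le
    · refine (min_le_left _ _).trans (v.2.2.1 ?_)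
      have hsd : s ≤ d - r := by
        calc s = r + s - r := (ENNReal.add_sub_cancel_left hrtop).symm
          _ ≤ d - r := tsub_le_tsub_right hrd r
      exact hsd.trans (le_of_not_ge (by assumption))
  have hwle : ∀ x, conv u'.1 v'.1 x ≤ w.1 x := by
    intro x
    rw [hconv, stepFun]; split
    · exact zero_le
    · refine (min_le_right _ _).trans (w.2.2.1 ?_)
      exact ((le_max_left y (r + s)).trans_lt (lt_of_not_ge (by assumption))).le
  refine le_iSup_of_le u' (le_iSup_of_le v' (le_iSup_of_le ⟨hule, hvle, hwle⟩ ?_))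
  rw [hconv, stepFun, if_neg (not_le.mpr hdt), min_comm]

/-- The quantale `Δ` satisfies
`w ⊓ (u ⊗ v) = ⋁ { u' ⊗ v' : u' ≤ u, v' ≤ v, u' ⊗ v' ≤ w }`
(both sides computed pointwise, as infima and suprema in `Δ` are pointwise
here); this is the condition guaranteeing that every injective probabilistic
metric space is exponentiable. -/
theorem distr_inf_tensor (u v w : Distr) (t : ℝ≥0∞) :
    min (w.1 t) (conv u.1 v.1 t) =
      ⨆ u' : Distr, ⨆ v' : Distr,
        ⨆ _ : u' ≤ u ∧ v' ≤ v ∧ ∀ s, conv u'.1 v'.1 s ≤ w.1 s,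
          conv u'.1 v'.1 t := by
  apply le_antisymm
  · refine le_of_forall_lt fun c hc => ?_
    rw [lt_min_iff] at hc
    obtain ⟨hcw, hcv⟩ := hc
    rw [conv] at hcv
    simp only [lt_iSup_iff] at hcv
    obtain ⟨r, s, hrst, hc2⟩ := hcv
    have hcw' : c < ⨆ y, ⨆ _ : y < t, w.1 y := by rw [← w.2.2.2 t]; exact hcw
    simp only [lt_iSup_iff] at hcw'
    obtain ⟨y, hyt, hcy⟩ := hcw'
    have hc3 : c < (⨆ r', ⨆ _ : r' < r, u.1 r') * ⨆ s', ⨆ _ : s' < s, v.1 s' := by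
      rw [← u.2.2.2 r, ← v.2.2.2 s]; exact hc2
    simp only [ENNReal.iSup_mul, ENNReal.mul_iSup, lt_iSup_iff] at hc3
    obtain ⟨r', hr', s', hs', hc4⟩ := hc3
    have hlt : s' + r' < t := (ENNReal.add_lt_add hs' hr').trans_le hrst
    exact (lt_min hcy hc4).trans_le (main_aux u v w t s' r' y hlt hyt)
  · refine iSup_le fun u' => iSup_le fun v' => iSup_le fun ⟨hu, hv, hw⟩ => ?_
    exact le_min (hw t) (conv_mono hu hv t)
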